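/- Fix real parameters M>0, l>0, and a with |a|<l, and assume r₊>0 satisfies Δ₋(r₊)=0 and Δ₋(r)>0 for all r>r₊. Then 3M/Ξ > r₊, V_σ(3M/Ξ) = 1/l² + (3M²/Ξ + Ξ·a²)/(((3M/Ξ)² + a²)²), and consequently sup_{r ∈ [r₊,∞)} V_σ(r) ≥ 1/l² + (3M²/Ξ + Ξ·a²)/(((3M/Ξ)² + a²)²) > 1/l². -/

import Mathlib

open Real MeasureTheory Set Filter Topology

/-- Δ₋(r) = (1+r²/l²)(r²+a²) − 2Mr -/
noncomputable def Dm (M l a r : ℝ) : ℝ := (1 + r^2/l^2)*(r^2+a^2) - 2*M*r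

/-- V_σ(r) = Δ₋(r)/(r²+a²)² -/
noncomputable def Vsig (M l a r : ℝ) : ℝ := Dm M l a r / (r^2+a^2)^2

/-- Θ(α) = 1 if α>0, 0 if α≤0 -/
noncomputable def Th (α : ℝ) : ℝ := if 0 < α then 1 else 0

/-- V_junk -/
noncomputable def Vjunk (M l a α r : ℝ) : ℝ :=
  -(3*r^2*(Dm M l a r)^2/(r^2+a^2)^4)
  + Dm M l a r * (5*r^4/l^2 + 3*r^2*(1+a^2/l^2) - 4*M*r + a^2)/(r^2+a^2)^3
  - (2/l^2) * (Dm M l a r * r^2/(r^2+a^2)^2)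
  - (α/l^2) * (Dm M l a r /(r^2+a^2)^2) * Th α * a^2

/-- V_mass -/
noncomputable def Vmass (M l a α r : ℝ) : ℝ :=
  ((2-α)/l^2) * (Dm M l a r * r^2/(r^2+a^2)^2)

/-- The full potential in the tortoise coordinate, with semiclassical parameter h. -/
noncomputable def Vfull (M l a α : ℝ) (R : ℝ → ℝ) (h x : ℝ) : ℝ :=
  Vsig M l a (R x) + h^2 * (Vjunk M l a α (R x) + Vmass M l a α (R x))

/-- κ is an eigenvalue of the Dirichlet problem P_DD(h). -/
def IsDirichletEigenvalue (M l a α : ℝ) (R : ℝ → ℝ) (xmax h κ : ℝ) : Prop :=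
  ∃ u : ℝ → ℝ,
    (∃ x ∈ Set.Ico xmax (π/2), u x ≠ 0) ∧
    ContDiffOn ℝ 2 u (Set.Ico xmax (π/2)) ∧
    (∀ x ∈ Set.Ioo xmax (π/2),
      -h^2 * deriv (deriv u) x + Vfull M l a α R h x * u x = κ * u x) ∧
    u xmax = 0 ∧
    MeasureTheory.IntegrableOn (fun x => (deriv u x)^2 + (R x)^2 * (u x)^2)
      (Set.Ioo xmax (π/2))


set_option maxHeartbeats 1000000 in
/-- the photon-sphere candidate 3M/Ξ lies beyond r₊, the value of V_σ there,
and the resulting lower bound on the supremum of V_σ over [r₊,∞). -/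
theorem statement7 (M l a : ℝ) (hM : 0 < M) (hl : 0 < l) (ha : |a| < l)
    (rp : ℝ) (hrp : 0 < rp) (hrp0 : Dm M l a rp = 0)
    (hrppos : ∀ r, rp < r → 0 < Dm M l a r) :
    rp < 3*M/(1 - a^2/l^2) ∧
    Vsig M l a (3*M/(1 - a^2/l^2)) =
      1/l^2 + (3*M^2/(1 - a^2/l^2) + (1 - a^2/l^2)*a^2)
        /(((3*M/(1 - a^2/l^2))^2 + a^2)^2) ∧
    sSup (Vsig M l a '' Set.Ici rp) ≥
      1/l^2 + (3*M^2/(1 - a^2/l^2) + (1 - a^2/l^2)*a^2)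
        /(((3*M/(1 - a^2/l^2))^2 + a^2)^2) ∧
    1/l^2 < 1/l^2 + (3*M^2/(1 - a^2/l^2) + (1 - a^2/l^2)*a^2)
        /(((3*M/(1 - a^2/l^2))^2 + a^2)^2) := by
  have hl2 : (0:ℝ) < l^2 := by positivity
  have ha2 : a^2 < l^2 := by
    nlinarith [abs_nonneg a, sq_abs a, ha]
  have hXi : 0 < 1 - a^2/l^2 := by
    rw [sub_pos, div_lt_one hl2]; exact ha2
  have hXi0 : (1 - a^2/l^2) ≠ 0 := ne_of_gt hXi
  have hl0 : l ≠ 0 := ne_of_gt hl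
  have hXle : 1 - a^2/l^2 ≤ 1 := by
    have : 0 ≤ a^2/l^2 := by positivity
    linarith
  set r₀ : ℝ := 3*M/(1 - a^2/l^2) with hr₀def
  have hr0 : 0 < r₀ := div_pos (by linarith) hXi
  have hla : (l^2 - a^2) ≠ 0 := ne_of_gt (by linarith)
  have hM3 : M = r₀*(1 - a^2/l^2)/3 := by
    rw [hr₀def]; field_simp
  clear_value r₀
  -- polynomial form of Dm rp = 0
  have hDmrp : (l^2 + rp^2)*(rp^2+a^2) - 2*M*rp*l^2 = 0 := by
    have h : Dm M l a rp * l^2 = (l^2 + rp^2)*(rp^2+a^2) - 2*M*rp*l^2 := by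
      unfold Dm; field_simp
    rw [hrp0] at h; linarith
  -- rp ≤ 2M
  have hrp2M : rp ≤ 2*M := by
    by_contra hc
    push_neg at hc
    nlinarith [mul_nonneg hl2.le (sq_nonneg a), mul_nonneg (sq_nonneg rp) (sq_nonneg a),
      sq_nonneg (rp*rp), mul_pos hrp hl2]
  have h1 : rp < r₀ := by
    rw [hr₀def, lt_div_iff₀ hXi]
    have : rp * (1 - a^2/l^2) ≤ rp := by nlinarith
    linarith
  have hra0 : (0:ℝ) < r₀^2 + a^2 := by positivity
  have hd0 : (r₀^2 + a^2) ≠ 0 := ne_of_gt hra0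
  have hden : (0:ℝ) < (r₀^2 + a^2)^2 := by positivity
  have hnum : 0 < 3*M^2/(1 - a^2/l^2) + (1 - a^2/l^2)*a^2 := by
    have h3 : 0 < 3*M^2/(1 - a^2/l^2) := div_pos (by nlinarith) hXi
    nlinarith [mul_nonneg hXi.le (sq_nonneg a)]
  have h2 : Vsig M l a r₀ =
      1/l^2 + (3*M^2/(1 - a^2/l^2) + (1 - a^2/l^2)*a^2)/((r₀^2 + a^2)^2) := by
    unfold Vsig Dm
    rw [hM3]
    field_simp
    ring
  have h4 : 1/l^2 < 1/l^2 + (3*M^2/(1 - a^2/l^2) + (1 - a^2/l^2)*a^2)/((r₀^2 + a^2)^2) := by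
    have := div_pos hnum hden
    linarith
  refine ⟨h1, h2, ?_, h4⟩
  -- boundedness above
  have hbdd : BddAbove (Vsig M l a '' Set.Ici rp) := by
    refine ⟨1/rp^2 + 1/l^2, ?_⟩
    rintro y ⟨r, hr, rfl⟩
    have hrpos : 0 < r := lt_of_lt_of_le hrp hr
    have hra : (0:ℝ) < r^2 + a^2 := by positivity
    have hr' : rp ≤ r := hr
    have hr2 : rp^2 ≤ r^2 := pow_le_pow_left₀ hrp.le hr' 2
    have hrel : 1/rp^2 + 1/l^2 - Vsig M l a r =
        ((l^2+rp^2)*(r^2+a^2)^2 - ((l^2+r^2)*(r^2+a^2) - 2*M*r*l^2)*rp^2)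
          / (rp^2*l^2*(r^2+a^2)^2) := by
      unfold Vsig Dm
      field_simp
    have hnn : 0 ≤ (l^2+rp^2)*(r^2+a^2)^2 - ((l^2+r^2)*(r^2+a^2) - 2*M*r*l^2)*rp^2 := by
      nlinarith [mul_nonneg (mul_nonneg hl2.le hra.le) (by nlinarith [sq_nonneg a] : (0:ℝ) ≤ r^2+a^2-rp^2),
        mul_nonneg (mul_nonneg (sq_nonneg rp) hra.le) (sq_nonneg a),
        mul_pos (mul_pos (mul_pos hM hrpos) hl2) (mul_pos hrp hrp)]
    have hq := div_nonneg hnn (by positivity : (0:ℝ) ≤ rp^2*l^2*(r^2+a^2)^2)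
    rw [← hrel] at hq
    linarith
  have hmem : (1/l^2 + (3*M^2/(1 - a^2/l^2) + (1 - a^2/l^2)*a^2)/((r₀^2 + a^2)^2)) ∈
      Vsig M l a '' Set.Ici rp := ⟨r₀, le_of_lt h1, h2⟩
  exact le_csSup hbdd hmem
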